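/- arXiv:1703.07337 — 4 statements merged into one kernel-verified Lean document; each statement's English description precedes it below -/
import Mathlib

section
/- Let λ₁ ≥ λ₂ ≥ ⋯ ≥ λₙ and ρ₁ ≤ ρ₂ ≤ ⋯ ≤ ρₙ be real numbers. Then ∑_{i≠j} (|λ_i − λ_j| + |ρ_i − ρ_j|) ≤ 2 ∑_{i=1}^n ∑_{j=1}^n |λ_i + ρ_j|. -/
open Finset

theorem stmt_2 (n : ℕ) (l r : Fin n → ℝ)
    (hl : ∀ i j : Fin n, i ≤ j → l j ≤ l i)
    (hr : ∀ i j : Fin n, i ≤ j → r i ≤ r j) :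
    ∑ p ∈ Finset.univ.filter (fun p : Fin n × Fin n => p.1 ≠ p.2),
        (|l p.1 - l p.2| + |r p.1 - r p.2|)
      ≤ 2 * ∑ i : Fin n, ∑ j : Fin n, |l i + r j| := by
  have key : ∀ i j : Fin n, i ≠ j →
      |l i - l j| + |r i - r j| ≤ |l i + r j| + |l j + r i| := by
    intro i j hij
    rcases lt_or_gt_of_ne hij with h | h
    · have h1 : l j ≤ l i := hl i j h.le
      have h2 : r i ≤ r j := hr i j h.le
      rw [abs_of_nonneg (sub_nonneg.2 h1), abs_of_nonpos (sub_nonpos.2 h2)]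
      have a1 : l i + r j ≤ |l i + r j| := le_abs_self _
      have a2 : -(l j + r i) ≤ |l j + r i| := neg_le_abs _
      linarith
    · have h1 : l i ≤ l j := hl j i h.le
      have h2 : r j ≤ r i := hr j i h.le
      rw [abs_of_nonpos (sub_nonpos.2 h1), abs_of_nonneg (sub_nonneg.2 h2)]
      have a1 : l j + r i ≤ |l j + r i| := le_abs_self _
      have a2 : -(l i + r j) ≤ |l i + r j| := neg_le_abs _
      linarith
  calc ∑ p ∈ Finset.univ.filter (fun p : Fin n × Fin n => p.1 ≠ p.2),
        (|l p.1 - l p.2| + |r p.1 - r p.2|)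
      ≤ ∑ p ∈ Finset.univ.filter (fun p : Fin n × Fin n => p.1 ≠ p.2),
        (|l p.1 + r p.2| + |l p.2 + r p.1|) := by
        refine Finset.sum_le_sum fun p hp => ?_
        exact key p.1 p.2 (Finset.mem_filter.1 hp).2
    _ = 2 * ∑ p ∈ Finset.univ.filter (fun p : Fin n × Fin n => p.1 ≠ p.2),
        |l p.1 + r p.2| := by
        rw [Finset.sum_add_distrib, two_mul]
        congr 1
        refine Finset.sum_nbij' (fun p => (p.2, p.1)) (fun p => (p.2, p.1)) ?_ ?_ ?_ ?_ ?_
        · intro p hp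
          simp only [Finset.mem_filter, Finset.mem_univ, true_and] at hp ⊢
          exact hp.symm
        · intro p hp
          simp only [Finset.mem_filter, Finset.mem_univ, true_and] at hp ⊢
          exact hp.symm
        · intro p _; rfl
        · intro p _; rfl
        · intro p _; rfl
    _ ≤ 2 * ∑ i : Fin n, ∑ j : Fin n, |l i + r j| := by
        have : ∑ i : Fin n, ∑ j : Fin n, |l i + r j|
            = ∑ p ∈ (Finset.univ : Finset (Fin n × Fin n)), |l p.1 + r p.2| := by
          rw [← Finset.univ_product_univ, Finset.sum_product]
        rw [this]
        have hsub := Finset.sum_le_sum_of_subset_of_nonneg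
          (Finset.filter_subset (fun p : Fin n × Fin n => p.1 ≠ p.2) Finset.univ)
          (fun p _ _ => abs_nonneg (l p.1 + r p.2))
        linarith
end

section
/- If f₁,…,fₙ are functions of a real (or complex) variable each differentiable n−1 times at a point α, then the limit of det(f_i(α_j))_{1≤i,j≤n} / ∏_{1≤i<j≤n}(α_j − α_i) as all α₁,…,αₙ tend to α equals det(f_i^{(j−1)}(α))_{1≤i,j≤n} / ∏_{j=1}^n (j−1)!. -/
open Finset Filter

section Aux
open Polynomial

noncomputable def dd (s : Finset ℝ) (f : ℝ → ℝ) : ℝ :=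
  ∑ x ∈ s, f x * (∏ y ∈ s.erase x, (x - y))⁻¹

lemma basis_coeff (s : Finset ℝ) (x : ℝ) (hx : x ∈ s) :
    (Lagrange.basis s id x).coeff (s.card - 1) = (∏ y ∈ s.erase x, (x - y))⁻¹ := by
  unfold Lagrange.basis Lagrange.basisDivisor
  have h1 : ∏ j ∈ s.erase x, (C (id x - id j)⁻¹ * (X - C (id j)))
      = C (∏ j ∈ s.erase x, (x - j)⁻¹) * ∏ j ∈ s.erase x, (X - C j) := by
    rw [Finset.prod_mul_distrib, map_prod]
    rfl
  rw [h1, Polynomial.coeff_C_mul, Finset.prod_inv_distrib]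
  have hm : (∏ j ∈ s.erase x, (X - C j) : ℝ[X]).Monic :=
    monic_prod_of_monic _ _ fun j _ => monic_X_sub_C j
  have hd : (∏ j ∈ s.erase x, (X - C j) : ℝ[X]).natDegree = s.card - 1 := by
    rw [natDegree_prod_of_monic _ _ fun j _ => monic_X_sub_C j]
    simp [Finset.card_erase_of_mem hx]
  rw [← hd, hm.coeff_natDegree, mul_one]

lemma interpolate_coeff (s : Finset ℝ) (f : ℝ → ℝ) :
    (Lagrange.interpolate s id f).coeff (s.card - 1) = dd s f := by
  rw [Lagrange.interpolate_apply, Polynomial.finset_sum_coeff]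
  refine Finset.sum_congr rfl fun x hx => ?_
  rw [Polynomial.coeff_C_mul, basis_coeff s x hx]

lemma iterate_derivative_eq_C {p : ℝ[X]} {j : ℕ} (h : p.natDegree ≤ j) :
    Polynomial.derivative^[j] p = C ((j.factorial : ℝ) * p.coeff j) := by
  have h1 : (Polynomial.derivative^[j] p).natDegree = 0 := by
    have := Polynomial.natDegree_iterate_derivative p j
    omega
  rw [Polynomial.eq_C_of_natDegree_le_zero h1.le]
  congr 1
  rw [Polynomial.coeff_iterate_derivative]
  simp [Nat.descFactorial_self, nsmul_eq_mul]

lemma deriv_iterate_poly (p : ℝ[X]) (m : ℕ) :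
    deriv^[m] (fun x => p.eval x) = fun x => (Polynomial.derivative^[m] p).eval x := by
  induction m with
  | zero => rfl
  | succ m ih =>
    rw [Function.iterate_succ_apply', ih, Function.iterate_succ_apply']
    funext x
    exact Polynomial.deriv (p := Polynomial.derivative^[m] p)

open Finset Filter Set

lemma rolle_step {u : Set ℝ} (hu : u.OrdConnected) {g : ℝ → ℝ}
    (hg : ∀ x ∈ u, ContinuousAt g x) (t : Finset ℝ) (ht : ↑t ⊆ u)
    (h0 : ∀ x ∈ t, g x = 0) :
    ∃ t' : Finset ℝ, t.card ≤ t'.card + 1 ∧ ↑t' ⊆ u ∧ (∀ x ∈ t', deriv g x = 0) ∧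
      ∀ x ∈ t', ∃ y ∈ t, x < y := by
  induction t using Finset.strongInduction with
  | _ t IH =>
  rcases le_or_gt t.card 1 with hc | hc
  · exact ⟨∅, by simpa using hc, by simp, by simp, by simp⟩
  · have hne : t.Nonempty := Finset.card_pos.mp (by omega)
    set M := t.max' hne with hM
    set t₂ := t.erase M with ht₂
    have ht₂c : t₂.card = t.card - 1 := Finset.card_erase_of_mem (t.max'_mem hne)
    have hne₂ : t₂.Nonempty := Finset.card_pos.mp (by omega)
    set m := t₂.max' hne₂ with hm
    have hmM : m < M := by
      have h1 : m ∈ t₂ := t₂.max'_mem hne₂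
      have h2 := Finset.ne_of_mem_erase h1
      exact lt_of_le_of_ne (t.le_max' m (Finset.mem_of_mem_erase h1)) h2
    have hmu : m ∈ u := ht (Finset.mem_of_mem_erase (t₂.max'_mem hne₂))
    have hMu : M ∈ u := ht (t.max'_mem hne)
    have hIcc : Set.Icc m M ⊆ u := hu.out hmu hMu
    obtain ⟨c, hc1, hc2⟩ := exists_deriv_eq_zero hmM
      (fun x hx => (hg x (hIcc hx)).continuousWithinAt)
      (by rw [h0 m (Finset.mem_of_mem_erase (t₂.max'_mem hne₂)), h0 M (t.max'_mem hne)])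
    obtain ⟨s, hs1, hs2, hs3, hs4⟩ := IH t₂ (Finset.erase_ssubset (t.max'_mem hne))
      (fun x hx => ht (Finset.mem_of_mem_erase hx))
      (fun x hx => h0 x (Finset.mem_of_mem_erase hx))
    have hcs : c ∉ s := by
      intro hcsmem
      obtain ⟨y, hy1, hy2⟩ := hs4 c hcsmem
      exact absurd (lt_of_lt_of_le hy2 (t₂.le_max' y hy1)) (not_lt.mpr hc1.1.le)
    refine ⟨insert c s, ?_, ?_, ?_, ?_⟩
    · rw [Finset.card_insert_of_notMem hcs]; omega
    · rw [Finset.coe_insert]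
      exact Set.insert_subset (hIcc ⟨hc1.1.le, hc1.2.le⟩) hs2
    · intro x hx
      rcases Finset.mem_insert.mp hx with h | h
      · rwa [h]
      · exact hs3 x h
    · intro x hx
      rcases Finset.mem_insert.mp hx with h | h
      · exact ⟨M, t.max'_mem hne, h ▸ hc1.2⟩
      · obtain ⟨y, hy1, hy2⟩ := hs4 x h
        exact ⟨y, Finset.mem_of_mem_erase hy1, hy2⟩

lemma rolle_iter {u : Set ℝ} (hu : u.OrdConnected) {g : ℝ → ℝ} (j : ℕ)
    (hg : ∀ m < j, ∀ x ∈ u, DifferentiableAt ℝ (deriv^[m] g) x)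
    (t : Finset ℝ) (ht : ↑t ⊆ u) (h0 : ∀ x ∈ t, g x = 0) :
    ∃ t' : Finset ℝ, t.card ≤ t'.card + j ∧ ↑t' ⊆ u ∧ ∀ x ∈ t', deriv^[j] g x = 0 := by
  induction j with
  | zero => exact ⟨t, by omega, ht, h0⟩
  | succ j IH =>
    obtain ⟨t', h1, h2, h3⟩ := IH (fun m hm => hg m (by omega))
    obtain ⟨t'', k1, k2, k3, _⟩ := rolle_step hu
      (fun x hx => (hg j (by omega) x hx).continuousAt) t' h2 h3
    refine ⟨t'', by omega, k2, fun x hx => ?_⟩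
    rw [Function.iterate_succ_apply']
    exact k3 x hx

lemma dd_mvt {u : Set ℝ} (hu : u.OrdConnected) (hop : IsOpen u) {f : ℝ → ℝ} (j : ℕ)
    (hd : ∀ m < j, ∀ x ∈ u, DifferentiableAt ℝ (deriv^[m] f) x)
    (s : Finset ℝ) (hs : ↑s ⊆ u) (hcard : s.card = j + 1) :
    ∃ ξ ∈ u, dd s f = deriv^[j] f ξ / (j.factorial : ℝ) := by
  classical
  set p := Lagrange.interpolate s id f with hp
  set g := fun x => f x - p.eval x with hg
  have hpdeg : p.natDegree ≤ j := by
    have h1 : p.degree < (j + 1 : ℕ) := by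
      rw [hp, ← hcard]
      exact Lagrange.degree_interpolate_lt f (Set.injOn_id _)
    rcases eq_or_ne p 0 with h | h
    · simp [h]
    · exact Nat.lt_succ_iff.mp ((Polynomial.natDegree_lt_iff_degree_lt h).mpr h1)
  -- derivatives of g on u
  have eqd : ∀ m, m ≤ j → Set.EqOn (deriv^[m] g)
      (fun x => deriv^[m] f x - (Polynomial.derivative^[m] p).eval x) u := by
    intro m
    induction m with
    | zero => intro _ x _; simp [hg]
    | succ m ih =>
      intro hmj x hx
      have hmj' : m < j := by omega
      have hev : deriv^[m] g =ᶠ[nhds x]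
          (fun y => deriv^[m] f y - (Polynomial.derivative^[m] p).eval y) :=
        Filter.eventuallyEq_of_mem (hop.mem_nhds hx) (ih hmj'.le)
      rw [Function.iterate_succ_apply', hev.deriv_eq]
      have hdf : DifferentiableAt ℝ (deriv^[m] f) x := hd m hmj' x hx
      have hdp : DifferentiableAt ℝ (fun y => (Polynomial.derivative^[m] p).eval y) x :=
        Polynomial.differentiableAt _
      rw [deriv_fun_sub hdf hdp, Function.iterate_succ_apply']
      congr 1
      have := deriv_iterate_poly p (m + 1)
      rw [Function.iterate_succ_apply'] at this
      calc deriv (fun y => (Polynomial.derivative^[m] p).eval y) x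
          = deriv^[m + 1] (fun y => p.eval y) x := by
            rw [Function.iterate_succ_apply', deriv_iterate_poly p m]
        _ = (Polynomial.derivative^[m + 1] p).eval x := by rw [deriv_iterate_poly p (m + 1)]
  have hgd : ∀ m < j, ∀ x ∈ u, DifferentiableAt ℝ (deriv^[m] g) x := by
    intro m hm x hx
    have hev : deriv^[m] g =ᶠ[nhds x]
        (fun y => deriv^[m] f y - (Polynomial.derivative^[m] p).eval y) :=
      Filter.eventuallyEq_of_mem (hop.mem_nhds hx) (eqd m hm.le)
    rw [hev.differentiableAt_iff]
    exact (hd m hm x hx).sub (Polynomial.differentiableAt _)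
  have h0 : ∀ x ∈ s, g x = 0 := by
    intro x hx
    have := Lagrange.eval_interpolate_at_node f (Set.injOn_id _) hx
    simp only [hg, id_eq] at this ⊢
    rw [hp, this, sub_self]
  obtain ⟨t', h1, h2, h3⟩ := rolle_iter hu j hgd s hs h0
  have hne : t'.Nonempty := Finset.card_pos.mp (by omega)
  obtain ⟨ξ, hξ⟩ := hne
  refine ⟨ξ, h2 hξ, ?_⟩
  have hz := h3 ξ hξ
  have hder : deriv^[j] g ξ = deriv^[j] f ξ - (Polynomial.derivative^[j] p).eval ξ :=
    eqd j le_rfl (h2 hξ)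
  rw [hder, iterate_derivative_eq_C hpdeg] at hz
  have hcoeff : p.coeff j = dd s f := by
    have := interpolate_coeff s f
    rwa [hcard, Nat.add_sub_cancel] at this
  rw [hcoeff] at hz
  simp only [Polynomial.eval_C] at hz
  have hfac : (j.factorial : ℝ) ≠ 0 := Nat.cast_ne_zero.mpr j.factorial_ne_zero
  field_simp
  linarith [hz]

lemma contDiffOn_iterate_deriv {f : ℝ → ℝ} {u : Set ℝ} (hu : IsOpen u) :
    ∀ (N m : ℕ), ContDiffOn ℝ N f u → m ≤ N →
      ContDiffOn ℝ ((N - m : ℕ) : ℕ∞) (deriv^[m] f) u := by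
  intro N m
  induction m generalizing f N with
  | zero => intro hf _; simpa using hf
  | succ m ih =>
    intro hf hm
    have h1 : ContDiffOn ℝ ((N - 1 : ℕ) : ℕ∞) (deriv f) u := by
      refine hf.deriv_of_isOpen hu ?_
      have : (N - 1 : ℕ) + 1 = N := by omega
      norm_cast
      omega
    have h2 := ih (N - 1) h1 (by omega)
    have h3 : N - 1 - m = N - (m + 1) := by omega
    rw [h3] at h2
    rwa [Function.iterate_succ_apply]

lemma iterate_deriv_differentiableAt {f : ℝ → ℝ} {u : Set ℝ} (hu : IsOpen u) {N m : ℕ}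
    (hf : ContDiffOn ℝ N f u) (hm : m < N) {x : ℝ} (hx : x ∈ u) :
    DifferentiableAt ℝ (deriv^[m] f) x := by
  have h := contDiffOn_iterate_deriv hu N m hf hm.le
  have h1 : (1 : WithTop ℕ∞) ≤ ((((N - m : ℕ) : ℕ∞)) : WithTop ℕ∞) := by
    norm_cast
    exact_mod_cast Nat.one_le_iff_ne_zero.mpr (by omega)
  exact ((h.differentiableOn (lt_of_lt_of_le zero_lt_one h1).ne') x hx).differentiableAt (hu.mem_nhds hx)

lemma iterate_deriv_continuousAt {f : ℝ → ℝ} {u : Set ℝ} (hu : IsOpen u) {N m : ℕ}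
    (hf : ContDiffOn ℝ N f u) (hm : m ≤ N) {x : ℝ} (hx : x ∈ u) :
    ContinuousAt (deriv^[m] f) x :=
  ((contDiffOn_iterate_deriv hu N m hf hm).continuousOn x hx).continuousAt (hu.mem_nhds hx)

lemma entry_tendsto {n : ℕ} {f : ℝ → ℝ} {a : ℝ}
    (hf : ContDiffAt ℝ (n - 1 : ℕ) f a) (k : Fin n) :
    Tendsto (fun v : Fin n → ℝ =>
        ∑ m ∈ Finset.Iic k, f (v m) * (∏ l ∈ (Finset.Iic k).erase m, (v m - v l))⁻¹)
      (nhdsWithin (fun _ => a) {v : Fin n → ℝ | Function.Injective v})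
      (nhds (iteratedDeriv k.val f a / (Nat.factorial k.val : ℝ))) := by
  set j := k.val with hj
  have hk : j ≤ n - 1 := by have := k.isLt; omega
  obtain ⟨u, hu, hcd⟩ := hf.contDiffOn le_rfl (by simp)
  obtain ⟨δ0, hδ0, hball⟩ := Metric.mem_nhds_iff.mp hu
  have hcd0 : ContDiffOn ℝ ((n - 1 : ℕ) : ℕ∞) f (Metric.ball a δ0) := hcd.mono hball
  have hcont : ContinuousAt (deriv^[j] f) a :=
    iterate_deriv_continuousAt Metric.isOpen_ball hcd0 hk (Metric.mem_ball_self hδ0)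
  rw [Metric.tendsto_nhdsWithin_nhds]
  intro ε hε
  have hfac : (0 : ℝ) < (Nat.factorial j : ℝ) := by positivity
  obtain ⟨δ1, hδ1, hcon⟩ := Metric.continuousAt_iff.mp hcont (ε * Nat.factorial j)
    (by positivity)
  refine ⟨min δ0 δ1, by positivity, fun v hv hdist => ?_⟩
  have hvm : ∀ m : Fin n, dist (v m) a < min δ0 δ1 := fun m =>
    lt_of_le_of_lt (dist_le_pi_dist v (fun _ => a) m) hdist
  set U := Metric.ball a (min δ0 δ1) with hU
  have hUo : IsOpen U := Metric.isOpen_ball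
  have hUc : U.OrdConnected := by
    rw [hU, Real.ball_eq_Ioo]; exact Set.ordConnected_Ioo
  have hUsub : U ⊆ Metric.ball a δ0 := Metric.ball_subset_ball (min_le_left _ _)
  have hd : ∀ m < j, ∀ x ∈ U, DifferentiableAt ℝ (deriv^[m] f) x := fun m hm x hx =>
    iterate_deriv_differentiableAt Metric.isOpen_ball hcd0 (by omega) (hUsub hx)
  set s := (Finset.Iic k).image v with hsdef
  have hssub : ↑s ⊆ U := by
    intro x hx
    simp only [hsdef, Finset.coe_image, Set.mem_image] at hx
    obtain ⟨m, _, rfl⟩ := hx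
    exact Metric.mem_ball.mpr (hvm m)
  have hscard : s.card = j + 1 := by
    rw [hsdef, Finset.card_image_of_injective _ hv, Fin.card_Iic]
  obtain ⟨ξ, hξU, hξ⟩ := dd_mvt hUc hUo j hd s hssub hscard
  have hFv : (∑ m ∈ Finset.Iic k, f (v m) * (∏ l ∈ (Finset.Iic k).erase m, (v m - v l))⁻¹)
      = dd s f := by
    rw [dd, hsdef, Finset.sum_image (fun x _ y _ h => hv h)]
    refine Finset.sum_congr rfl fun m hm => ?_
    congr 2
    rw [← Finset.image_erase hv, Finset.prod_image (fun x _ y _ h => hv h)]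
  rw [hFv, hξ, iteratedDeriv_eq_iterate, Real.dist_eq, div_sub_div_same, abs_div,
    abs_of_pos hfac, div_lt_iff₀ hfac]
  have := hcon (show dist ξ a < δ1 from lt_of_lt_of_le (Metric.mem_ball.mp hξU) (min_le_right _ _))
  rwa [Real.dist_eq] at this

open Finset Filter Polynomial

lemma vdm_prod_eq {n : ℕ} (g : Fin n → Fin n → ℝ) :
    ∏ p ∈ Finset.univ.filter (fun p : Fin n × Fin n => p.1 < p.2), g p.1 p.2
      = ∏ k : Fin n, ∏ l ∈ Finset.Iio k, g l k := by
  rw [Finset.prod_sigma']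
  refine (Finset.prod_bij (fun (x : Σ _ : Fin n, Fin n) _ => ((x.2, x.1) : Fin n × Fin n))
    ?_ ?_ ?_ ?_).symm
  · rintro ⟨k, l⟩ h
    simp only [Finset.mem_sigma, Finset.mem_univ, Finset.mem_Iio, true_and] at h
    simp [h]
  · rintro ⟨k, l⟩ h ⟨k', l'⟩ h' hh
    simp only [Prod.mk.injEq] at hh
    simp [hh.1, hh.2]
  · rintro ⟨l, k⟩ h
    simp only [Finset.mem_filter, Finset.mem_univ, true_and] at h
    exact ⟨⟨k, l⟩, by simp [h], rfl⟩
  · intros; rfl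

lemma det_eq {n : ℕ} (f : Fin n → ℝ → ℝ) (v : Fin n → ℝ) :
    Matrix.det (Matrix.of fun i j : Fin n => f i (v j))
        / ∏ p ∈ Finset.univ.filter (fun p : Fin n × Fin n => p.1 < p.2), (v p.2 - v p.1)
    = Matrix.det (Matrix.of fun i k : Fin n =>
        ∑ m ∈ Finset.Iic k, f i (v m) * (∏ l ∈ (Finset.Iic k).erase m, (v m - v l))⁻¹) := by
  set M : Matrix (Fin n) (Fin n) ℝ := Matrix.of fun i j => f i (v j)
  set L : Matrix (Fin n) (Fin n) ℝ := Matrix.of fun m k =>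
    if m ≤ k then (∏ l ∈ (Finset.Iic k).erase m, (v m - v l))⁻¹ else 0
  have hB : (Matrix.of fun i k : Fin n =>
      ∑ m ∈ Finset.Iic k, f i (v m) * (∏ l ∈ (Finset.Iic k).erase m, (v m - v l))⁻¹) = M * L := by
    ext i k
    rw [Matrix.mul_apply]
    simp only [M, L, Matrix.of_apply, mul_ite, mul_zero]
    rw [← Finset.sum_filter]
    congr 1
    ext m
    simp
  have hL : L.det = ∏ k : Fin n, (∏ l ∈ Finset.Iio k, (v k - v l))⁻¹ := by
    rw [Matrix.det_of_upperTriangular]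
    · refine Finset.prod_congr rfl fun k _ => ?_
      simp [L, Finset.Iic_erase]
    · intro i j hij
      show (if i ≤ j then _ else 0) = 0
      exact if_neg (not_le.mpr hij)
  rw [hB, Matrix.det_mul, hL, vdm_prod_eq (fun l k => v k - v l), div_eq_mul_inv,
    ← Finset.prod_inv_distrib]

end Aux

/-- The confluent (divided-difference) limit of a generalized Vandermonde-type
determinant: as all evaluation points tend to `a`, the ratio of
`det(f_i(α_j))` to the Vandermonde `∏_{i<j} (α_j - α_i)` tends to the
Wronskian-type determinant `det(f_i^{(j-1)}(a)) / ∏_j (j-1)!`. -/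
theorem stmt_8 (n : ℕ) (f : Fin n → ℝ → ℝ) (a : ℝ)
    (hf : ∀ i, ContDiffAt ℝ (n - 1 : ℕ) (f i) a) :
    Tendsto
      (fun v : Fin n → ℝ =>
        Matrix.det (Matrix.of fun i j : Fin n => f i (v j))
          / ∏ p ∈ Finset.univ.filter (fun p : Fin n × Fin n => p.1 < p.2),
              (v p.2 - v p.1))
      (nhdsWithin (fun _ => a) {v : Fin n → ℝ | Function.Injective v})
      (nhds (Matrix.det (Matrix.of fun i j : Fin n => iteratedDeriv j.val (f i) a)
        / ∏ j : Fin n, (Nat.factorial j.val : ℝ))) := by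
  have hrw : (fun v : Fin n → ℝ =>
      Matrix.det (Matrix.of fun i j : Fin n => f i (v j))
        / ∏ p ∈ Finset.univ.filter (fun p : Fin n × Fin n => p.1 < p.2), (v p.2 - v p.1))
      = fun v : Fin n → ℝ => Matrix.det (Matrix.of fun i k : Fin n =>
          ∑ m ∈ Finset.Iic k, f i (v m) * (∏ l ∈ (Finset.Iic k).erase m, (v m - v l))⁻¹) :=
    funext fun v => det_eq f v
  rw [hrw]
  have htar : Matrix.det (Matrix.of fun i j : Fin n => iteratedDeriv j.val (f i) a)
        / ∏ j : Fin n, (Nat.factorial j.val : ℝ)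
      = Matrix.det (Matrix.of fun i k : Fin n =>
          iteratedDeriv k.val (f i) a / (Nat.factorial k.val : ℝ)) := by
    have h1 : (Matrix.of fun i k : Fin n =>
          iteratedDeriv k.val (f i) a / (Nat.factorial k.val : ℝ))
        = Matrix.of fun i k : Fin n => (fun k : Fin n => ((Nat.factorial k.val : ℝ))⁻¹) k *
            (Matrix.of fun i j : Fin n => iteratedDeriv j.val (f i) a) i k := by
      ext i k
      simp [div_eq_inv_mul, mul_comm]
    rw [h1, Matrix.det_mul_row, Finset.prod_inv_distrib, div_eq_mul_inv, mul_comm]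
  rw [htar]
  have hmat : Tendsto (fun v : Fin n → ℝ => (Matrix.of fun i k : Fin n =>
        ∑ m ∈ Finset.Iic k, f i (v m) * (∏ l ∈ (Finset.Iic k).erase m, (v m - v l))⁻¹))
      (nhdsWithin (fun _ => a) {v : Fin n → ℝ | Function.Injective v})
      (nhds (Matrix.of fun i k : Fin n =>
        iteratedDeriv k.val (f i) a / (Nat.factorial k.val : ℝ))) := by
    refine tendsto_pi_nhds.mpr ?_
    intro i
    rw [tendsto_pi_nhds]
    intro k
    exact entry_tendsto (hf i) k
  exact ((Continuous.matrix_det continuous_id).tendsto _).comp hmat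
end

section
/- The determinantal formula for the continuum symplectic Schur function in one variable and the limit of symplectic Schur polynomials: for α ∈ ℝ and x ≥ 0, lim_{δ→0⁺} δ · e^{−αx + δα⌊x/δ⌋} · sp_{⌊x/δ⌋}(e^{δα}) = (e^{αx} − e^{−αx})/(2α), where sp_m(y) = (y^{m+1} − y^{−(m+1)})/(y − y^{−1}) is the symplectic Schur polynomial of Sp(2) with shape m ∈ ℕ. -/
open Filter Real

lemma exp_zpow' (x : ℝ) (n : ℤ) : Real.exp x ^ n = Real.exp (n * x) := by
  rw [← Real.rpow_intCast, Real.rpow_def_of_pos (Real.exp_pos x), Real.log_exp, mul_comm]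

/-- The symplectic Schur polynomial of `Sp(2)` with shape `m`:
`sp_m(y) = (y^{m+1} − y^{−(m+1)})/(y − y⁻¹)`. -/
noncomputable def spSchur (m : ℤ) (y : ℝ) : ℝ :=
  (y ^ (m + 1) - y ^ (-(m + 1))) / (y - y⁻¹)

lemma floor_mul_tendsto (x : ℝ) :
    Tendsto (fun δ : ℝ => δ * (⌊x / δ⌋ : ℝ)) (nhdsWithin 0 (Set.Ioi 0)) (nhds x) := by
  refine tendsto_of_tendsto_of_tendsto_of_le_of_le'
      (g := fun δ : ℝ => x - δ) (h := fun _ => x) ?_ ?_ ?_ ?_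
  · have : Tendsto (fun δ : ℝ => x - δ) (nhds 0) (nhds (x - 0)) :=
      (tendsto_const_nhds.sub tendsto_id)
    simpa using this.mono_left nhdsWithin_le_nhds
  · exact tendsto_const_nhds
  · filter_upwards [self_mem_nhdsWithin] with δ (hδ : 0 < δ)
    have h1 : x / δ - 1 < (⌊x / δ⌋ : ℝ) := Int.sub_one_lt_floor _
    have h2 : δ * (x / δ) = x := by field_simp
    nlinarith [h1, h2, hδ]
  · filter_upwards [self_mem_nhdsWithin] with δ (hδ : 0 < δ)
    have h1 : (⌊x / δ⌋ : ℝ) ≤ x / δ := Int.floor_le _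
    calc δ * (⌊x / δ⌋ : ℝ) ≤ δ * (x / δ) := by nlinarith
    _ = x := by field_simp

lemma slope_lim (α : ℝ) (hα : α ≠ 0) :
    Tendsto (fun δ : ℝ => δ / (Real.exp (δ * α) - Real.exp (-(δ * α))))
      (nhdsWithin 0 (Set.Ioi 0)) (nhds (2 * α)⁻¹) := by
  have h1 : HasDerivAt (fun t : ℝ => t * α) α 0 := hasDerivAt_mul_const α
  have h2 : HasDerivAt (fun t : ℝ => Real.exp (t * α)) α 0 := by
    have := (Real.hasDerivAt_exp ((0:ℝ) * α)).comp 0 h1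
    simpa [Function.comp_def] using this
  have h3 : HasDerivAt (fun t : ℝ => Real.exp (-(t * α))) (-α) 0 := by
    have := (Real.hasDerivAt_exp (-((0:ℝ) * α))).comp 0 h1.neg
    simpa [Function.comp_def] using this
  have hD : HasDerivAt (fun t : ℝ => Real.exp (t * α) - Real.exp (-(t * α))) (2 * α) 0 := by
    have := h2.sub h3
    have e : (2:ℝ) * α = α - -α := by ring
    rw [e]; exact this
  have hs := hasDerivAt_iff_tendsto_slope.mp hD
  have hs' : Tendsto (fun t : ℝ => (Real.exp (t * α) - Real.exp (-(t * α))) / t)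
      (nhdsWithin 0 {(0:ℝ)}ᶜ) (nhds (2 * α)) := by
    refine hs.congr' ?_
    filter_upwards [self_mem_nhdsWithin] with t ht
    simp [slope_def_field, div_eq_mul_inv, mul_comm]
  have hinv := hs'.inv₀ (mul_ne_zero two_ne_zero hα)
  have hmono : nhdsWithin (0:ℝ) (Set.Ioi 0) ≤ nhdsWithin 0 {(0:ℝ)}ᶜ :=
    nhdsWithin_mono 0 (fun t ht => ne_of_gt ht)
  refine (hinv.mono_left hmono).congr' ?_
  filter_upwards [self_mem_nhdsWithin] with t (ht : 0 < t)
  simp [inv_div]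

/-- Zero-temperature scaling limit of symplectic Schur polynomials to the
continuum symplectic Schur function, `n = 1` case. -/
theorem stmt_16 (α x : ℝ) (hx : 0 ≤ x) :
    Tendsto
      (fun δ : ℝ =>
        δ * Real.exp (-(α * x) + δ * α * (⌊x / δ⌋ : ℝ)) *
          spSchur ⌊x / δ⌋ (Real.exp (δ * α)))
      (nhdsWithin 0 (Set.Ioi 0))
      (nhds ((Real.exp (α * x) - Real.exp (-(α * x))) / (2 * α))) := by
  rcases eq_or_ne α 0 with hα | hα
  · subst hα
    simpa [spSchur] using
      (tendsto_const_nhds : Tendsto (fun _ : ℝ => (0:ℝ)) (nhdsWithin 0 (Set.Ioi 0)) (nhds 0))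
  · have hF := floor_mul_tendsto x
    have hA : Tendsto (fun δ : ℝ => Real.exp (-(α * x) + α * (δ * (⌊x / δ⌋ : ℝ))))
        (nhdsWithin 0 (Set.Ioi 0)) (nhds 1) := by
      have h0 : Tendsto (fun δ : ℝ => -(α * x) + α * (δ * (⌊x / δ⌋ : ℝ)))
          (nhdsWithin 0 (Set.Ioi 0)) (nhds 0) := by
        have := Tendsto.add
          (tendsto_const_nhds : Tendsto (fun _ : ℝ => -(α * x)) (nhdsWithin 0 (Set.Ioi 0))
            (nhds (-(α * x)))) (hF.const_mul α)
        simpa using this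
      simpa [Function.comp_def] using (Real.continuous_exp.tendsto 0).comp h0
    have hG : Tendsto (fun δ : ℝ => δ * (⌊x / δ⌋ : ℝ) + δ)
        (nhdsWithin 0 (Set.Ioi 0)) (nhds x) := by
      have := hF.add (tendsto_id.mono_left (nhdsWithin_le_nhds (s := Set.Ioi (0:ℝ))))
      simpa using this
    have hB : Tendsto (fun δ : ℝ =>
          Real.exp (α * (δ * (⌊x / δ⌋ : ℝ) + δ)) - Real.exp (-(α * (δ * (⌊x / δ⌋ : ℝ) + δ))))
        (nhdsWithin 0 (Set.Ioi 0))
        (nhds (Real.exp (α * x) - Real.exp (-(α * x)))) := by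
      have h1 := (Real.continuous_exp.tendsto (α * x)).comp (hG.const_mul α)
      have h2 := (Real.continuous_exp.tendsto (-(α * x))).comp ((hG.const_mul α).neg)
      exact h1.sub h2
    have hC := slope_lim α hα
    have hT := (hA.mul hB).mul hC
    have hT' : Tendsto (fun δ : ℝ =>
          Real.exp (-(α * x) + α * (δ * (⌊x / δ⌋ : ℝ))) *
            (Real.exp (α * (δ * (⌊x / δ⌋ : ℝ) + δ)) -
              Real.exp (-(α * (δ * (⌊x / δ⌋ : ℝ) + δ)))) *
            (δ / (Real.exp (δ * α) - Real.exp (-(δ * α)))))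
        (nhdsWithin 0 (Set.Ioi 0))
        (nhds ((Real.exp (α * x) - Real.exp (-(α * x))) / (2 * α))) := by
      convert hT using 2
      rw [one_mul, div_eq_mul_inv]
    refine hT'.congr' ?_
    filter_upwards [self_mem_nhdsWithin] with δ (hδ : 0 < δ)
    rw [spSchur, exp_zpow', exp_zpow', ← Real.exp_neg, Int.cast_neg, Int.cast_add,
      Int.cast_one]
    have e1 : α * (δ * (⌊x / δ⌋ : ℝ) + δ) = ((⌊x / δ⌋ : ℝ) + 1) * (δ * α) := by ring
    have e2 : α * (δ * (⌊x / δ⌋ : ℝ)) = δ * α * (⌊x / δ⌋ : ℝ) := by ring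
    rw [e1, e2]
    ring
end

section
/- If X ∼ InverseGamma(εγ, 1) (i.e. 1/X follows the Gamma distribution with shape εγ and rate 1) for ε > 0, then ε log X converges in distribution, as ε → 0⁺, to an exponential random variable with rate γ > 0; equivalently, for every u > 0, P(ε log X ≤ u) = P(1/X ≥ e^{−u/ε}) → 1 − e^{−γu}. -/
open Filter MeasureTheory ProbabilityTheory Real
open Set

noncomputable def gammaCDFReal (a r : ℝ) := cdf (gammaMeasure a r)

lemma gammaCDFReal_eq_integral {a r : ℝ} (ha : 0 < a) (hr : 0 < r) (x : ℝ) :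
    gammaCDFReal a r x = ∫ x in Iic x, gammaPDFReal a r x :=
  cdf_gammaMeasure_eq_integral ha hr x


lemma aux_integrable {a : ℝ} (ha : 0 < a) : Integrable (gammaPDFReal a 1) := by
  refine ⟨(measurable_gammaPDFReal a 1).aestronglyMeasurable, ?_⟩
  rw [hasFiniteIntegral_iff_ofReal (ae_of_all _ (gammaPDFReal_nonneg ha one_pos))]
  have := lintegral_gammaPDF_eq_one ha one_pos
  simp only [gammaPDF] at this
  rw [this]
  exact ENNReal.one_lt_top

lemma aux_cdf_eq {a x : ℝ} (ha : 0 < a) (hx : 0 < x) :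
    gammaCDFReal a 1 x = ∫ t in Ioc 0 x, t ^ (a - 1) * Real.exp (-t) / Real.Gamma a := by
  rw [gammaCDFReal_eq_integral ha one_pos]
  have hsplit : Iic (0:ℝ) ∪ Ioc 0 x = Iic x := Iic_union_Ioc_eq_Iic hx.le
  rw [← hsplit, setIntegral_union (Iic_disjoint_Ioc le_rfl) measurableSet_Ioc
    (aux_integrable ha).integrableOn (aux_integrable ha).integrableOn]
  have h1 : ∫ t in Iic (0:ℝ), gammaPDFReal a 1 t = 0 := by
    rw [integral_Iic_eq_integral_Iio]
    have hz : ∀ t ∈ Iio (0:ℝ), gammaPDFReal a 1 t = 0 := fun t ht => by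
      simp [gammaPDFReal, not_le.mpr (Set.mem_Iio.mp ht)]
    rw [setIntegral_congr_fun measurableSet_Iio hz, integral_zero]
  rw [h1, zero_add]
  refine setIntegral_congr_fun measurableSet_Ioc fun t ht => ?_
  simp only [gammaPDFReal, if_pos ht.1.le, one_rpow, one_mul]
  ring

lemma aux_bounds {a x : ℝ} (ha : 0 < a) (hx : 0 < x) :
    Real.exp (-x) * x ^ a / Real.Gamma (a + 1) ≤ gammaCDFReal a 1 x ∧
      gammaCDFReal a 1 x ≤ x ^ a / Real.Gamma (a + 1) := by
  have hΓ : 0 < Real.Gamma a := Real.Gamma_pos_of_pos ha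
  have hgint : IntegrableOn (fun t : ℝ => t ^ (a - 1)) (Ioc 0 x) := by
    have := intervalIntegral.intervalIntegrable_rpow' (a := 0) (b := x)
      (show (-1:ℝ) < a - 1 by linarith)
    rwa [intervalIntegrable_iff_integrableOn_Ioc_of_le hx.le] at this
  have hI : ∫ t in Ioc 0 x, t ^ (a - 1) = x ^ a / a := by
    rw [← intervalIntegral.integral_of_le hx.le,
      integral_rpow (Or.inl (by linarith : (-1:ℝ) < a - 1))]
    rw [sub_add_cancel, Real.zero_rpow ha.ne']
    ring
  have hpdfint : IntegrableOn (fun t : ℝ => t ^ (a - 1) * Real.exp (-t) / Real.Gamma a)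
      (Ioc 0 x) := by
    have := (aux_integrable ha).integrableOn (s := Ioc 0 x)
    refine this.congr_fun (fun t ht => ?_) measurableSet_Ioc
    simp only [gammaPDFReal, if_pos ht.1.le, one_rpow, one_mul]
    ring
  have hΓ1 : Real.Gamma (a + 1) = a * Real.Gamma a := Real.Gamma_add_one ha.ne'
  constructor
  · rw [aux_cdf_eq ha hx]
    calc Real.exp (-x) * x ^ a / Real.Gamma (a + 1)
        = ∫ t in Ioc 0 x, Real.exp (-x) * t ^ (a - 1) / Real.Gamma a := by
          rw [integral_div, integral_const_mul, hI, hΓ1]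
          field_simp
      _ ≤ _ := by
          refine setIntegral_mono_on ((hgint.const_mul _).div_const _) hpdfint
            measurableSet_Ioc fun t ht => ?_
          have ht1 : (0:ℝ) ≤ t ^ (a - 1) := Real.rpow_nonneg ht.1.le _
          have : Real.exp (-x) ≤ Real.exp (-t) := Real.exp_le_exp.mpr (by linarith [ht.2])
          have := mul_le_mul_of_nonneg_left this ht1
          rw [div_le_div_iff_of_pos_right hΓ]
          nlinarith
  · rw [aux_cdf_eq ha hx]
    calc (∫ t in Ioc 0 x, t ^ (a - 1) * Real.exp (-t) / Real.Gamma a)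
        ≤ ∫ t in Ioc 0 x, t ^ (a - 1) / Real.Gamma a := by
          refine setIntegral_mono_on hpdfint (hgint.div_const _)
            measurableSet_Ioc fun t ht => ?_
          have ht1 : (0:ℝ) ≤ t ^ (a - 1) := Real.rpow_nonneg ht.1.le _
          have : Real.exp (-t) ≤ 1 := Real.exp_le_one_iff.mpr (by linarith [ht.1])
          rw [div_le_div_iff_of_pos_right hΓ]
          nlinarith
      _ = x ^ a / Real.Gamma (a + 1) := by
          rw [integral_div, hI, hΓ1]
          field_simp

/-- Zero-temperature limit of the inverse-gamma distribution: if
`1/X ∼ Gamma(εγ, 1)`, then `ε log X` converges in distribution to `Exp(γ)`;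
equivalently, for every `u > 0`,
`P(1/X ≥ e^{−u/ε}) → 1 − e^{−γu}` as `ε → 0⁺`. -/
theorem stmt_17 (γ u : ℝ) (hγ : 0 < γ) (hu : 0 < u) :
    Tendsto
      (fun ε : ℝ =>
        (gammaMeasure (ε * γ) 1 (Set.Ici (Real.exp (-u / ε)))).toReal)
      (nhdsWithin 0 (Set.Ioi 0))
      (nhds (1 - Real.exp (-(γ * u)))) := by
  -- reduce to CDF convergence
  have hΓtend : Tendsto (fun ε : ℝ => Real.Gamma (ε * γ + 1)) (nhdsWithin 0 (Set.Ioi 0))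
      (nhds 1) := by
    have hc : ContinuousAt Real.Gamma 1 := by
      refine (Real.differentiableAt_Gamma fun m => ?_).continuousAt
      have hm : (0:ℝ) ≤ m := Nat.cast_nonneg m
      intro h
      linarith [h]
    have h1 : Tendsto (fun ε : ℝ => ε * γ + 1) (nhdsWithin 0 (Set.Ioi 0)) (nhds 1) := by
      have : Tendsto (fun ε : ℝ => ε * γ + 1) (nhds 0) (nhds (0 * γ + 1)) := by
        exact ((continuous_id.mul continuous_const).add continuous_const).tendsto 0
      simpa using this.mono_left nhdsWithin_le_nhds
    have := hc.tendsto.comp h1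
    simpa [Function.comp_def] using this
  have hxtend : Tendsto (fun ε : ℝ => Real.exp (-u / ε)) (nhdsWithin 0 (Set.Ioi 0))
      (nhds 0) := by
    have h1 : Tendsto (fun ε : ℝ => -u / ε) (nhdsWithin 0 (Set.Ioi 0)) atBot := by
      have h2 : Tendsto (fun ε : ℝ => u / ε) (nhdsWithin 0 (Set.Ioi 0)) atTop := by
        simpa [div_eq_mul_inv] using tendsto_inv_nhdsGT_zero.const_mul_atTop hu
      simpa [neg_div] using tendsto_neg_atBot_iff.mpr h2
    exact Real.tendsto_exp_atBot.comp h1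
  have hLtend : Tendsto (fun ε : ℝ =>
      Real.exp (-Real.exp (-u / ε)) * Real.exp (-(γ * u)) / Real.Gamma (ε * γ + 1))
      (nhdsWithin 0 (Set.Ioi 0)) (nhds (Real.exp (-(γ * u)))) := by
    have h1 : Tendsto (fun ε : ℝ => Real.exp (-Real.exp (-u / ε)))
        (nhdsWithin 0 (Set.Ioi 0)) (nhds 1) := by
      have hneg : Tendsto (fun ε : ℝ => -Real.exp (-u / ε)) (nhdsWithin 0 (Set.Ioi 0))
          (nhds 0) := by simpa using hxtend.neg
      simpa [Function.comp_def] using (Real.continuous_exp.tendsto 0).comp hneg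
    have := ((h1.mul (tendsto_const_nhds (x := Real.exp (-(γ * u))))).div hΓtend one_ne_zero)
    simpa [Pi.div_def] using this
  have hUtend : Tendsto (fun ε : ℝ => Real.exp (-(γ * u)) / Real.Gamma (ε * γ + 1))
      (nhdsWithin 0 (Set.Ioi 0)) (nhds (Real.exp (-(γ * u)))) := by
    have := (tendsto_const_nhds (x := Real.exp (-(γ * u)))).div hΓtend one_ne_zero
    simpa [Pi.div_def] using this
  have hpow : ∀ ε ∈ Set.Ioi (0:ℝ), Real.exp (-u / ε) ^ (ε * γ) = Real.exp (-(γ * u)) := by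
    intro ε hε
    rw [← Real.exp_log (Real.exp_pos _), Real.log_exp, ← Real.exp_one_rpow, ← Real.rpow_mul
      (le_of_lt (Real.exp_pos 1))]
    · rw [Real.exp_one_rpow]
      have hε' : ε ≠ 0 := ne_of_gt (Set.mem_Ioi.mp hε)
      congr 1
      field_simp
  have hcdf : Tendsto (fun ε : ℝ => gammaCDFReal (ε * γ) 1 (Real.exp (-u / ε)))
      (nhdsWithin 0 (Set.Ioi 0)) (nhds (Real.exp (-(γ * u)))) := by
    refine tendsto_of_tendsto_of_tendsto_of_le_of_le' hLtend hUtend ?_ ?_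
    · filter_upwards [self_mem_nhdsWithin] with ε hε
      have ha : 0 < ε * γ := mul_pos hε hγ
      have := (aux_bounds ha (Real.exp_pos (-u / ε))).1
      rwa [hpow ε hε] at this
    · filter_upwards [self_mem_nhdsWithin] with ε hε
      have ha : 0 < ε * γ := mul_pos hε hγ
      have := (aux_bounds ha (Real.exp_pos (-u / ε))).2
      rwa [hpow ε hε] at this
  have heq : ∀ ε ∈ Set.Ioi (0:ℝ),
      (gammaMeasure (ε * γ) 1 (Set.Ici (Real.exp (-u / ε)))).toReal
        = 1 - gammaCDFReal (ε * γ) 1 (Real.exp (-u / ε)) := by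
    intro ε hε
    have ha : 0 < ε * γ := mul_pos hε hγ
    haveI := isProbabilityMeasure_gammaMeasure ha one_pos
    set μ := gammaMeasure (ε * γ) 1
    set x := Real.exp (-u / ε)
    have hsing : μ {x} = 0 :=
      withDensity_absolutelyContinuous volume (gammaPDF (ε * γ) 1) (measure_singleton x)
    have h1 : μ (Set.Ici x) = 1 - μ (Set.Iic x) := by
      rw [← measure_congr (Iio_ae_eq_Iic' hsing : (Iio x : Set ℝ) =ᵐ[μ] Iic x),
        ← Set.compl_Iio, prob_compl_eq_one_sub measurableSet_Iio]
    rw [h1, ENNReal.toReal_sub_of_le prob_le_one ENNReal.one_ne_top, ENNReal.toReal_one]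
    congr 1
    rw [gammaCDFReal, cdf_eq_real, measureReal_def]
  refine Tendsto.congr' ?_ ((tendsto_const_nhds.sub hcdf))
  filter_upwards [self_mem_nhdsWithin] with ε hε
  exact (heq ε hε).symm
end
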